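/- Let A : ℝ/ℤ → SL(2,ℂ) be analytic with a bounded holomorphic extension to |Im z| < δ. Then the function ε ↦ L(α, A_ε), defined for |ε| < δ where A_ε(x) = A(x + iε), is convex in ε. -/

import Mathlib

open Filter MeasureTheory Set
open Complex

/-- Frobenius-type norm of a 2×2 complex matrix. -/
noncomputable def mnorm (B : Matrix (Fin 2) (Fin 2) ℂ) : ℝ :=
  Real.sqrt (∑ i : Fin 2, ∑ j : Fin 2, ‖B i j‖ ^ 2)

/-- Euclidean norm of a vector in ℂ². -/
noncomputable def vnorm (w : Fin 2 → ℂ) : ℝ :=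
  Real.sqrt (∑ i : Fin 2, ‖w i‖ ^ 2)

/-- The n-step cocycle product A(x+(n-1)α)⋯A(x+α)A(x). -/
noncomputable def cocycle (A : ℝ → Matrix (Fin 2) (Fin 2) ℂ) (α : ℝ) (n : ℕ) (x : ℝ) :
    Matrix (Fin 2) (Fin 2) ℂ :=
  (((List.range n).reverse).map (fun k => A (x + k * α))).prod

/-- The Lyapunov exponent L(α,A) = lim (1/n) ∫ log‖A_n(x)‖ dx. -/
noncomputable def lyap (α : ℝ) (A : ℝ → Matrix (Fin 2) (Fin 2) ℂ) : ℝ :=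
  Filter.limsup
    (fun n : ℕ => (n : ℝ)⁻¹ * ∫ x in (0:ℝ)..1, Real.log (mnorm (cocycle A α n x)))
    Filter.atTop


lemma hasDerivAt_line_x {φ : ℂ → ℂ} {φ' : ℂ} {x ε : ℝ}
    (h : HasDerivAt φ φ' (x + ε*Complex.I)) :
    HasDerivAt (fun t : ℝ => φ (t + ε*Complex.I)) φ' x := by
  have h1 : HasDerivAt (fun w : ℂ => φ (w + ε*Complex.I)) (φ' * 1) (x:ℂ) :=
    h.comp (x:ℂ) ((hasDerivAt_id (x:ℂ)).add_const _)
  simpa using h1.comp_ofReal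

lemma hasDerivAt_line_e {φ : ℂ → ℂ} {φ' : ℂ} {x ε : ℝ}
    (h : HasDerivAt φ φ' (x + ε*Complex.I)) :
    HasDerivAt (fun t : ℝ => φ (x + t*Complex.I)) (φ' * Complex.I) ε := by
  have h2 : HasDerivAt (fun w : ℂ => (x:ℂ) + w*Complex.I) (1*Complex.I) (ε:ℂ) :=
    ((hasDerivAt_id (ε:ℂ)).mul_const _).const_add _
  have h1 : HasDerivAt (fun w : ℂ => φ ((x:ℂ) + w*Complex.I)) (φ' * (1*Complex.I)) (ε:ℂ) :=
    h.comp (ε:ℂ) h2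
  simpa using h1.comp_ofReal

lemma hasDerivAt_normSq_comp {c : ℝ → ℂ} {c' : ℂ} {t : ℝ} (h : HasDerivAt c c' t) :
    HasDerivAt (fun s => Complex.normSq (c s)) (2 * (c' * (starRingEnd ℂ) (c t)).re) t := by
  have hm : HasDerivAt (fun s => c s * (starRingEnd ℂ) (c s))
      (c' * (starRingEnd ℂ) (c t) + c t * (starRingEnd ℂ) c') t := h.mul h.star
  have hre : HasDerivAt (fun s => (c s * (starRingEnd ℂ) (c s)).re)
      ((c' * (starRingEnd ℂ) (c t) + c t * (starRingEnd ℂ) c').re) t :=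
    Complex.reCLM.hasFDerivAt.comp_hasDerivAt t hm
  have heq : ∀ s, (c s * (starRingEnd ℂ) (c s)).re = Complex.normSq (c s) := by
    intro s; rw [Complex.mul_conj]; simp
  rw [show (fun s => Complex.normSq (c s)) = fun s => (c s * (starRingEnd ℂ) (c s)).re from
    (funext fun s => (heq s).symm)]
  convert hre using 1
  have : (c t * (starRingEnd ℂ) c').re = (c' * (starRingEnd ℂ) (c t)).re := by
    simp [Complex.mul_re, Complex.conj_re, Complex.conj_im]; ring
  simp [Complex.add_re, this]; ring

lemma normSq_sum_le {ι : Type*} (s : Finset ι) (a b : ι → ℂ) :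
    Complex.normSq (∑ k ∈ s, a k * b k) ≤ (∑ k ∈ s, Complex.normSq (a k)) * (∑ k ∈ s, Complex.normSq (b k)) := by
  have h1 : ‖∑ k ∈ s, a k * b k‖ ≤ ∑ k ∈ s, ‖a k‖ * ‖b k‖ := by
    refine (norm_sum_le _ _).trans ?_
    exact le_of_eq (Finset.sum_congr rfl fun k _ => norm_mul _ _)
  have h2 : (∑ k ∈ s, ‖a k‖ * ‖b k‖) ^ 2
      ≤ (∑ k ∈ s, ‖a k‖ ^ 2) * (∑ k ∈ s, ‖b k‖ ^ 2) :=
    Finset.sum_mul_sq_le_sq_mul_sq s _ _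
  calc Complex.normSq (∑ k ∈ s, a k * b k) = ‖∑ k ∈ s, a k * b k‖ ^ 2 :=
        (Complex.sq_norm _).symm
    _ ≤ (∑ k ∈ s, ‖a k‖ * ‖b k‖) ^ 2 := by
        apply pow_le_pow_left₀ (norm_nonneg _) h1
    _ ≤ _ := by
        rw [show (∑ k ∈ s, Complex.normSq (a k)) = ∑ k ∈ s, ‖a k‖ ^ 2 from
          Finset.sum_congr rfl fun k _ => (Complex.sq_norm _).symm,
          show (∑ k ∈ s, Complex.normSq (b k)) = ∑ k ∈ s, ‖b k‖ ^ 2 from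
          Finset.sum_congr rfl fun k _ => (Complex.sq_norm _).symm]
        exact h2

lemma key {δ : ℝ} (hδ : 0 < δ) {ι : Type} [Fintype ι] (f : ι → ℂ → ℂ)
    (hf : ∀ k, DifferentiableOn ℂ (f k) {z : ℂ | |z.im| < δ})
    (hper : ∀ k z, f k (z + 1) = f k z)
    (hpos : ∀ z : ℂ, |z.im| < δ → 0 < ∑ k, Complex.normSq (f k z)) :
    ConvexOn ℝ (Set.Ioo (-δ) δ)
      (fun ε : ℝ => ∫ x in (0:ℝ)..1,
        Real.log (∑ k, Complex.normSq (f k (x + ε * Complex.I)))) := by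
  set U : Set ℂ := {z : ℂ | |z.im| < δ} with hU
  have hUo : IsOpen U := by
    have : U = Complex.im ⁻¹' (Ioo (-δ) δ) := by ext z; simp [hU, abs_lt]
    rw [this]; exact isOpen_Ioo.preimage Complex.continuous_im
  have him : ∀ (x ε : ℝ), ((x:ℂ) + (ε:ℂ) * Complex.I).im = ε := by
    intro x ε; simp
  have hmem : ∀ (x ε : ℝ), |ε| < δ → ((x:ℂ) + (ε:ℂ) * Complex.I) ∈ U := by
    intro x ε hε; simp only [hU, mem_setOf_eq, him]; exact hε
  have hfan : ∀ k, AnalyticOnNhd ℂ (f k) U := fun k => (hf k).analyticOnNhd hUo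
  set d : ι → ℂ → ℂ := fun k => deriv (f k) with hd
  set d2 : ι → ℂ → ℂ := fun k => deriv (d k) with hd2
  have hdan : ∀ k, AnalyticOnNhd ℂ (d k) U := fun k => (hfan k).deriv
  have hd2an : ∀ k, AnalyticOnNhd ℂ (d2 k) U := fun k => (hdan k).deriv
  have hfd : ∀ k, ∀ z ∈ U, HasDerivAt (f k) (d k z) z := fun k z hz =>
    ((hfan k z hz).differentiableAt).hasDerivAt
  have hdd : ∀ k, ∀ z ∈ U, HasDerivAt (d k) (d2 k z) z := fun k z hz =>
    ((hdan k z hz).differentiableAt).hasDerivAt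
  have hperd : ∀ k z, d k (z + 1) = d k z := by
    intro k z
    have h1 : (fun w => f k (w + 1)) = f k := funext fun w => hper k w
    have h2 : deriv (fun w => f k (w + 1)) z = deriv (f k) (z + 1) := by
      exact deriv_comp_add_const _ _ _
    simp only [hd]
    rw [← h2, h1]
  set S : ℂ → ℝ := fun z => ∑ k, Complex.normSq (f k z) with hS
  set T : ℂ → ℂ := fun z => ∑ k, d k z * (starRingEnd ℂ) (f k z) with hT
  set P : ℂ → ℂ := fun z => ∑ k, d2 k z * (starRingEnd ℂ) (f k z) with hP
  set Q : ℂ → ℝ := fun z => ∑ k, Complex.normSq (d k z) with hQ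
  have hfc : ∀ k, ContinuousOn (f k) U := fun k => (hfan k).continuousOn
  have hdc : ∀ k, ContinuousOn (d k) U := fun k => (hdan k).continuousOn
  have hd2c : ∀ k, ContinuousOn (d2 k) U := fun k => (hd2an k).continuousOn
  have hSc : ContinuousOn S U := by
    apply continuousOn_finset_sum
    intro k _
    exact Complex.continuous_normSq.comp_continuousOn (hfc k)
  have hconjc : Continuous (starRingEnd ℂ) := Complex.continuous_conj
  have hTc : ContinuousOn T U := by
    apply continuousOn_finset_sum
    intro k _
    exact (hdc k).mul (hconjc.comp_continuousOn (hfc k))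
  have hPc : ContinuousOn P U := by
    apply continuousOn_finset_sum
    intro k _
    exact (hd2c k).mul (hconjc.comp_continuousOn (hfc k))
  have hQc : ContinuousOn Q U := by
    apply continuousOn_finset_sum
    intro k _
    exact Complex.continuous_normSq.comp_continuousOn (hdc k)
  have hSpos : ∀ z ∈ U, 0 < S z := fun z hz => hpos z hz
  have hperS : ∀ z, ∀ w : ℂ, w = z + 1 → S w = S z := by
    intro z w hw; rw [hw, hS]; exact Finset.sum_congr rfl fun k _ => by rw [hper]
  have hperT : ∀ z, T (z + 1) = T z := by
    intro z; rw [hT]; exact Finset.sum_congr rfl fun k _ => by rw [hper, hperd]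
  -- first derivatives of S along the two directions
  have hSx : ∀ (x ε : ℝ), |ε| < δ → HasDerivAt (fun t : ℝ => S ((t:ℂ) + (ε:ℂ)*Complex.I))
      (2 * (T ((x:ℂ) + (ε:ℂ)*Complex.I)).re) x := by
    intro x ε hε
    have hz := hmem x ε hε
    have h1 : HasDerivAt (fun t : ℝ => S ((t:ℂ) + (ε:ℂ)*Complex.I))
        (∑ k, 2 * ((d k ((x:ℂ)+(ε:ℂ)*Complex.I)) * (starRingEnd ℂ) (f k ((x:ℂ)+(ε:ℂ)*Complex.I))).re) x := by
      simp only [hS]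
      apply HasDerivAt.fun_sum
      intro k _
      exact hasDerivAt_normSq_comp (hasDerivAt_line_x (hfd k _ hz))
    convert h1 using 1
    simp only [hT, Complex.re_sum, Finset.mul_sum]
  have hSe : ∀ (x ε : ℝ), |ε| < δ → HasDerivAt (fun t : ℝ => S ((x:ℂ) + (t:ℂ)*Complex.I))
      (2 * (Complex.I * T ((x:ℂ) + (ε:ℂ)*Complex.I)).re) ε := by
    intro x ε hε
    have hz := hmem x ε hε
    have h1 : HasDerivAt (fun t : ℝ => S ((x:ℂ) + (t:ℂ)*Complex.I))
        (∑ k, 2 * ((d k ((x:ℂ)+(ε:ℂ)*Complex.I) * Complex.I) * (starRingEnd ℂ) (f k ((x:ℂ)+(ε:ℂ)*Complex.I))).re) ε := by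
      simp only [hS]
      apply HasDerivAt.fun_sum
      intro k _
      exact hasDerivAt_normSq_comp (hasDerivAt_line_e (hfd k _ hz))
    convert h1 using 1
    simp only [hT, Complex.re_sum, Finset.mul_sum]
    apply Finset.sum_congr rfl
    intro k _
    congr 1
    congr 1
    ring
  have hTx : ∀ (x ε : ℝ), |ε| < δ → HasDerivAt (fun t : ℝ => T ((t:ℂ) + (ε:ℂ)*Complex.I))
      (P ((x:ℂ) + (ε:ℂ)*Complex.I) + ((Q ((x:ℂ) + (ε:ℂ)*Complex.I) : ℝ) : ℂ)) x := by
    intro x ε hε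
    have hz := hmem x ε hε
    have h1 : HasDerivAt (fun t : ℝ => T ((t:ℂ) + (ε:ℂ)*Complex.I))
        (∑ k, (d2 k ((x:ℂ)+(ε:ℂ)*Complex.I) * (starRingEnd ℂ) (f k ((x:ℂ)+(ε:ℂ)*Complex.I))
          + d k ((x:ℂ)+(ε:ℂ)*Complex.I) * (starRingEnd ℂ) (d k ((x:ℂ)+(ε:ℂ)*Complex.I)))) x := by
      simp only [hT]
      apply HasDerivAt.fun_sum
      intro k _
      have ha := hasDerivAt_line_x (hdd k _ hz)
      have hb := (hasDerivAt_line_x (hfd k _ hz)).star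
      simpa [Complex.star_def] using ha.fun_mul hb
    convert h1 using 1
    rw [hP, hQ, Finset.sum_add_distrib]
    congr 1
    push_cast
    apply Finset.sum_congr rfl
    intro k _
    rw [← Complex.mul_conj (d k ((x:ℂ)+(ε:ℂ)*Complex.I))]
  have hTe : ∀ (x ε : ℝ), |ε| < δ → HasDerivAt (fun t : ℝ => T ((x:ℂ) + (t:ℂ)*Complex.I))
      (Complex.I * P ((x:ℂ) + (ε:ℂ)*Complex.I)
        - Complex.I * ((Q ((x:ℂ) + (ε:ℂ)*Complex.I) : ℝ) : ℂ)) ε := by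
    intro x ε hε
    have hz := hmem x ε hε
    have h1 : HasDerivAt (fun t : ℝ => T ((x:ℂ) + (t:ℂ)*Complex.I))
        (∑ k, ((d2 k ((x:ℂ)+(ε:ℂ)*Complex.I) * Complex.I) * (starRingEnd ℂ) (f k ((x:ℂ)+(ε:ℂ)*Complex.I))
          + d k ((x:ℂ)+(ε:ℂ)*Complex.I) * (starRingEnd ℂ) (d k ((x:ℂ)+(ε:ℂ)*Complex.I) * Complex.I))) ε := by
      simp only [hT]
      apply HasDerivAt.fun_sum
      intro k _
      have ha := hasDerivAt_line_e (hdd k _ hz)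
      have hb := (hasDerivAt_line_e (hfd k _ hz)).star
      simpa [Complex.star_def] using ha.fun_mul hb
    convert h1 using 1
    rw [hP, hQ]
    push_cast
    rw [Finset.mul_sum, Finset.mul_sum, ← Finset.sum_sub_distrib]
    apply Finset.sum_congr rfl
    intro k _
    rw [map_mul, Complex.conj_I, ← Complex.mul_conj (d k ((x:ℂ)+(ε:ℂ)*Complex.I))]
    ring
  set ux : ℂ → ℝ := fun z => 2 * (T z).re / S z with hux
  set ue : ℂ → ℝ := fun z => 2 * (Complex.I * T z).re / S z with hue
  set uxx : ℂ → ℝ := fun z => (2 * (P z + ((Q z : ℝ) : ℂ)).re * S z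
      - 2 * (T z).re * (2 * (T z).re)) / S z ^ 2 with huxx
  set uee : ℂ → ℝ := fun z => (2 * (Complex.I * (Complex.I * P z - Complex.I * ((Q z : ℝ) : ℂ))).re * S z
      - 2 * (Complex.I * T z).re * (2 * (Complex.I * T z).re)) / S z ^ 2 with huee
  have hlog_x : ∀ (x ε : ℝ), |ε| < δ → HasDerivAt (fun t : ℝ => Real.log (S ((t:ℂ) + (ε:ℂ)*Complex.I)))
      (ux ((x:ℂ) + (ε:ℂ)*Complex.I)) x := by
    intro x ε hε
    simpa [hux] using (hSx x ε hε).log (ne_of_gt (hSpos _ (hmem x ε hε)))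
  have hlog_e : ∀ (x ε : ℝ), |ε| < δ → HasDerivAt (fun t : ℝ => Real.log (S ((x:ℂ) + (t:ℂ)*Complex.I)))
      (ue ((x:ℂ) + (ε:ℂ)*Complex.I)) ε := by
    intro x ε hε
    simpa [hue] using (hSe x ε hε).log (ne_of_gt (hSpos _ (hmem x ε hε)))
  have hux_x : ∀ (x ε : ℝ), |ε| < δ → HasDerivAt (fun t : ℝ => ux ((t:ℂ) + (ε:ℂ)*Complex.I))
      (uxx ((x:ℂ) + (ε:ℂ)*Complex.I)) x := by
    intro x ε hε
    have hnum : HasDerivAt (fun t : ℝ => 2 * (T ((t:ℂ)+(ε:ℂ)*Complex.I)).re)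
        (2 * (P ((x:ℂ)+(ε:ℂ)*Complex.I) + ((Q ((x:ℂ)+(ε:ℂ)*Complex.I) : ℝ):ℂ)).re) x :=
      (Complex.reCLM.hasFDerivAt.comp_hasDerivAt x (hTx x ε hε)).const_mul 2
    have := hnum.fun_div (hSx x ε hε) (ne_of_gt (hSpos _ (hmem x ε hε)))
    simpa [hux, huxx] using this
  have hue_e : ∀ (x ε : ℝ), |ε| < δ → HasDerivAt (fun t : ℝ => ue ((x:ℂ) + (t:ℂ)*Complex.I))
      (uee ((x:ℂ) + (ε:ℂ)*Complex.I)) ε := by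
    intro x ε hε
    have hnumI : HasDerivAt (fun t : ℝ => Complex.I * T ((x:ℂ)+(t:ℂ)*Complex.I))
        (Complex.I * (Complex.I * P ((x:ℂ)+(ε:ℂ)*Complex.I)
          - Complex.I * ((Q ((x:ℂ)+(ε:ℂ)*Complex.I) : ℝ):ℂ))) ε :=
      (hTe x ε hε).const_mul Complex.I
    have hnum : HasDerivAt (fun t : ℝ => 2 * (Complex.I * T ((x:ℂ)+(t:ℂ)*Complex.I)).re)
        (2 * (Complex.I * (Complex.I * P ((x:ℂ)+(ε:ℂ)*Complex.I)
          - Complex.I * ((Q ((x:ℂ)+(ε:ℂ)*Complex.I) : ℝ):ℂ))).re) ε :=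
      (Complex.reCLM.hasFDerivAt.comp_hasDerivAt ε hnumI).const_mul 2
    have := hnum.fun_div (hSe x ε hε) (ne_of_gt (hSpos _ (hmem x ε hε)))
    simpa [hue, huee] using this
  have hkey : ∀ z ∈ U, 0 ≤ uxx z + uee z := by
    intro z hz
    have hSp : 0 < S z := hSpos z hz
    have hCS : Complex.normSq (T z) ≤ Q z * S z := by
      rw [hT, hQ, hS]
      have h1 := normSq_sum_le (Finset.univ : Finset ι) (fun k => d k z)
        (fun k => (starRingEnd ℂ) (f k z))
      simpa [Complex.normSq_conj] using h1
    have e : uxx z + uee z = (4 * Q z * S z - 4 * Complex.normSq (T z)) / S z ^ 2 := by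
      rw [huxx, huee, ← add_div]
      congr 1
      simp only [Complex.mul_re, Complex.add_re, Complex.sub_re, Complex.mul_im, Complex.add_im,
        Complex.sub_im, Complex.I_re, Complex.I_im, Complex.ofReal_re, Complex.ofReal_im,
        Complex.normSq_apply]
      ring
    rw [e]
    apply div_nonneg _ (sq_nonneg _)
    nlinarith [hCS]
  -- continuity of the auxiliary functions on U
  have hSne : ∀ z ∈ U, S z ≠ 0 := fun z hz => ne_of_gt (hSpos z hz)
  have hreC : ∀ (gg : ℂ → ℂ), ContinuousOn gg U → ContinuousOn (fun z => (gg z).re) U :=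
    fun gg hg => Complex.continuous_re.comp_continuousOn hg
  have hQC' : ContinuousOn (fun z => ((Q z : ℝ) : ℂ)) U :=
    Complex.continuous_ofReal.comp_continuousOn hQc
  have huxC : ContinuousOn ux U := by
    simp only [hux]
    exact (continuousOn_const.mul (hreC _ hTc)).div hSc hSne
  have hueC : ContinuousOn ue U := by
    simp only [hue]
    exact (continuousOn_const.mul (hreC _ (continuousOn_const.mul hTc))).div hSc hSne
  have huxxC : ContinuousOn uxx U := by
    simp only [huxx]
    apply ContinuousOn.div _ (hSc.pow 2) (fun z hz => pow_ne_zero _ (hSne z hz))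
    exact ((continuousOn_const.mul (hreC _ (hPc.add hQC'))).mul hSc).sub
      ((continuousOn_const.mul (hreC _ hTc)).mul (continuousOn_const.mul (hreC _ hTc)))
  have hueeC : ContinuousOn uee U := by
    simp only [huee]
    apply ContinuousOn.div _ (hSc.pow 2) (fun z hz => pow_ne_zero _ (hSne z hz))
    exact ((continuousOn_const.mul (hreC _ (continuousOn_const.mul
        ((continuousOn_const.mul hPc).sub (continuousOn_const.mul hQC'))))).mul hSc).sub
      ((continuousOn_const.mul (hreC _ (continuousOn_const.mul hTc))).mul
        (continuousOn_const.mul (hreC _ (continuousOn_const.mul hTc))))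
  have hlogSc : ContinuousOn (fun z => Real.log (S z)) U := hSc.log hSne
  -- continuity along horizontal lines
  have hcont_line : ∀ (gg : ℂ → ℝ), ContinuousOn gg U → ∀ ε : ℝ, |ε| < δ →
      Continuous (fun x : ℝ => gg ((x:ℂ) + (ε:ℂ)*Complex.I)) := by
    intro gg hgg ε hε
    have hc : Continuous (fun x : ℝ => (x:ℂ) + (ε:ℂ)*Complex.I) :=
      Complex.continuous_ofReal.add continuous_const
    exact hgg.comp_continuous hc (fun x => hmem x ε hε)
  -- uniform bounds on compact rectangles
  have hbound : ∀ (gg : ℂ → ℝ), ContinuousOn gg U → ∀ (a b : ℝ), Icc a b ⊆ Ioo (-δ) δ →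
      ∃ M : ℝ, ∀ ε' ∈ Icc a b, ∀ x ∈ Icc (0:ℝ) 1, ‖gg ((x:ℂ) + (ε':ℂ)*Complex.I)‖ ≤ M := by
    intro gg hg a b hsub
    have hK : IsCompact (Icc a b ×ˢ Icc (0:ℝ) 1) := isCompact_Icc.prod isCompact_Icc
    have hline2c : Continuous (fun p : ℝ × ℝ => ((p.2:ℂ) + (p.1:ℂ) * Complex.I)) :=
      (Complex.continuous_ofReal.comp continuous_snd).add
        ((Complex.continuous_ofReal.comp continuous_fst).mul continuous_const)
    have hmaps : ∀ p ∈ (Icc a b ×ˢ Icc (0:ℝ) 1), ((p.2:ℂ) + (p.1:ℂ) * Complex.I) ∈ U := by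
      intro p hp
      have h1 : p.1 ∈ Ioo (-δ) δ := hsub hp.1
      exact hmem p.2 p.1 (abs_lt.2 ⟨h1.1, h1.2⟩)
    have hcont : ContinuousOn (fun p : ℝ × ℝ => gg ((p.2:ℂ) + (p.1:ℂ) * Complex.I))
        (Icc a b ×ˢ Icc (0:ℝ) 1) := hg.comp hline2c.continuousOn hmaps
    obtain ⟨M, hM⟩ := hK.exists_bound_of_continuousOn hcont
    exact ⟨M, fun ε' hε' x hx => hM (ε', x) ⟨hε', hx⟩⟩
  -- the function and its derivative
  set g : ℝ → ℝ := fun ε => ∫ x in (0:ℝ)..1, Real.log (S ((x:ℂ) + (ε:ℂ)*Complex.I)) with hgdef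
  set J : ℝ → ℝ := fun ε => ∫ x in (0:ℝ)..1, ue ((x:ℂ) + (ε:ℂ)*Complex.I) with hJdef
  have hD : ∀ ε₀ ∈ Ioo (-δ) δ, HasDerivAt g (J ε₀) ε₀ := by
    intro ε₀ hε₀
    have hab : |ε₀| < δ := abs_lt.2 ⟨hε₀.1, hε₀.2⟩
    set r : ℝ := (δ - |ε₀|) / 2 with hr
    have hrpos : 0 < r := by
      have : 0 < δ - |ε₀| := by linarith
      positivity
    have hball : ∀ ε' ∈ Metric.ball ε₀ r, |ε'| < δ := by
      intro ε' hε'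
      have h1 : |ε' - ε₀| < r := by rwa [Metric.mem_ball, Real.dist_eq] at hε'
      have h2 : |ε'| ≤ |ε₀| + |ε' - ε₀| := by
        calc |ε'| = |ε₀ + (ε' - ε₀)| := by ring_nf
          _ ≤ |ε₀| + |ε' - ε₀| := abs_add_le _ _
      have : |ε' - ε₀| < (δ - |ε₀|) / 2 := by rwa [← hr]
      linarith
    have hsub : Icc (ε₀ - r) (ε₀ + r) ⊆ Ioo (-δ) δ := by
      intro t ht
      have h1 : |t - ε₀| ≤ r := by
        rw [abs_le]; constructor <;> [linarith [ht.1]; linarith [ht.2]]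
      have h2 : |t| ≤ |ε₀| + |t - ε₀| := by
        calc |t| = |ε₀ + (t - ε₀)| := by ring_nf
          _ ≤ |ε₀| + |t - ε₀| := abs_add_le _ _
      have h3 : |t| < δ := by
        have : r < δ - |ε₀| := by rw [hr]; linarith
        linarith
      exact ⟨(abs_lt.1 h3).1, (abs_lt.1 h3).2⟩
    obtain ⟨M, hM⟩ := hbound ue hueC (ε₀ - r) (ε₀ + r) hsub
    have hres := intervalIntegral.hasDerivAt_integral_of_dominated_loc_of_deriv_le
      (μ := MeasureTheory.volume) (𝕜 := ℝ)
      (F := fun (ε : ℝ) (x : ℝ) => Real.log (S ((x:ℂ) + (ε:ℂ)*Complex.I)))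
      (F' := fun (ε : ℝ) (x : ℝ) => ue ((x:ℂ) + (ε:ℂ)*Complex.I)) (x₀ := ε₀) (a := 0) (b := 1)
      (bound := fun _ => M) (s := Metric.ball ε₀ r) (Metric.ball_mem_nhds ε₀ hrpos) ?_ ?_ ?_ ?_ ?_ ?_
    · exact hres.2
    · filter_upwards [Metric.ball_mem_nhds ε₀ hrpos] with ε' hε'
      exact (hcont_line _ hlogSc ε' (hball ε' hε')).aestronglyMeasurable
    · exact (hcont_line _ hlogSc ε₀ hab).intervalIntegrable 0 1
    · exact (hcont_line _ hueC ε₀ hab).aestronglyMeasurable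
    · apply MeasureTheory.ae_of_all
      intro x hx ε' hε'
      have h1 : |ε' - ε₀| < r := by rwa [Metric.mem_ball, Real.dist_eq] at hε'
      have h2 : ε' ∈ Icc (ε₀ - r) (ε₀ + r) := by
        rw [abs_lt] at h1; constructor <;> linarith [h1.1, h1.2]
      have hx' : x ∈ Icc (0:ℝ) 1 := by
        rw [uIoc_of_le (by norm_num : (0:ℝ) ≤ 1)] at hx
        exact ⟨le_of_lt hx.1, hx.2⟩
      exact hM ε' h2 x hx'
    · exact intervalIntegrable_const
    · apply MeasureTheory.ae_of_all
      intro x _ ε' hε'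
      exact hlog_e x ε' (hball ε' hε')
  -- monotonicity of the derivative J
  have hmono : MonotoneOn J (Ioo (-δ) δ) := by
    intro e1 h1 e2 h2 hle
    have h1' : |e1| < δ := abs_lt.2 ⟨h1.1, h1.2⟩
    have h2' : |e2| < δ := abs_lt.2 ⟨h2.1, h2.2⟩
    have hIccsub : Icc e1 e2 ⊆ Ioo (-δ) δ := fun t ht =>
      ⟨lt_of_lt_of_le h1.1 ht.1, lt_of_le_of_lt ht.2 h2.2⟩
    have habs : ∀ t ∈ Icc e1 e2, |t| < δ := fun t ht =>
      abs_lt.2 ⟨(hIccsub ht).1, (hIccsub ht).2⟩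
    have hlineC : ∀ (gg : ℂ → ℝ), ContinuousOn gg U → ∀ x : ℝ,
        ContinuousOn (fun t : ℝ => gg ((x:ℂ) + (t:ℂ)*Complex.I)) (Icc e1 e2) := by
      intro gg hgg x
      apply hgg.comp ((continuous_const.add (Complex.continuous_ofReal.mul continuous_const) :
        Continuous fun t : ℝ => (x:ℂ) + (t:ℂ)*Complex.I).continuousOn)
      intro t ht
      exact hmem x t (habs t ht)
    -- FTC in the vertical direction, for every x
    have hfta : ∀ x : ℝ, ∫ t in e1..e2, uee ((x:ℂ) + (t:ℂ)*Complex.I)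
        = ue ((x:ℂ)+(e2:ℂ)*Complex.I) - ue ((x:ℂ)+(e1:ℂ)*Complex.I) := by
      intro x
      apply intervalIntegral.integral_eq_sub_of_hasDerivAt
        (f := fun t : ℝ => ue ((x:ℂ) + (t:ℂ)*Complex.I))
      · intro t ht
        rw [uIcc_of_le hle] at ht
        exact hue_e x t (habs t ht)
      · apply ContinuousOn.intervalIntegrable
        rw [uIcc_of_le hle]
        exact hlineC uee hueeC x
    have hcomp : ∀ x : ℝ, (-(∫ t in e1..e2, uxx ((x:ℂ)+(t:ℂ)*Complex.I)))
        ≤ ue ((x:ℂ)+(e2:ℂ)*Complex.I) - ue ((x:ℂ)+(e1:ℂ)*Complex.I) := by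
      intro x
      rw [← hfta x, ← intervalIntegral.integral_neg]
      apply intervalIntegral.integral_mono_on hle
      · apply ContinuousOn.intervalIntegrable
        rw [uIcc_of_le hle]
        exact (hlineC uxx huxxC x).neg
      · apply ContinuousOn.intervalIntegrable
        rw [uIcc_of_le hle]
        exact hlineC uee hueeC x
      · intro t ht
        have := hkey _ (hmem x t (habs t ht))
        linarith
    -- integrability on the product rectangle
    have hint2 : MeasureTheory.Integrable
        (Function.uncurry fun (x t : ℝ) => uxx ((x:ℂ) + (t:ℂ)*Complex.I))
        ((MeasureTheory.volume.restrict (Ioc (0:ℝ) 1)).prod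
          (MeasureTheory.volume.restrict (Ioc e1 e2))) := by
      rw [MeasureTheory.Measure.prod_restrict]
      apply MeasureTheory.IntegrableOn.mono_set (t := Icc (0:ℝ) 1 ×ˢ Icc e1 e2) ?_
        (Set.prod_mono Ioc_subset_Icc_self Ioc_subset_Icc_self)
      apply ContinuousOn.integrableOn_compact (isCompact_Icc.prod isCompact_Icc)
      apply huxxC.comp
      · exact ((Complex.continuous_ofReal.comp continuous_fst).add
          ((Complex.continuous_ofReal.comp continuous_snd).mul continuous_const)).continuousOn
      · intro p hp
        exact hmem p.1 p.2 (habs _ hp.2)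
    have hswap := MeasureTheory.integral_integral_swap hint2
    -- the inner x-integral vanishes by periodicity
    have hzero : (∫ t in Ioc e1 e2, ∫ x in Ioc (0:ℝ) 1, uxx ((x:ℂ)+(t:ℂ)*Complex.I)) = 0 := by
      rw [MeasureTheory.setIntegral_congr_fun (g := fun _ => (0:ℝ)) measurableSet_Ioc ?_,
        MeasureTheory.integral_zero]
      intro t ht
      have ht' : |t| < δ := habs t (Ioc_subset_Icc_self ht)
      have hFTC : ∫ x in (0:ℝ)..1, uxx ((x:ℂ)+(t:ℂ)*Complex.I)
          = ux ((((1:ℝ)):ℂ) + (t:ℂ)*Complex.I) - ux ((((0:ℝ)):ℂ) + (t:ℂ)*Complex.I) := by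
        apply intervalIntegral.integral_eq_sub_of_hasDerivAt
          (f := fun x : ℝ => ux ((x:ℂ) + (t:ℂ)*Complex.I))
        · intro x _
          exact hux_x x t ht'
        · apply ContinuousOn.intervalIntegrable
          apply huxxC.comp ((Complex.continuous_ofReal.add continuous_const).continuousOn)
          intro x _
          exact hmem x t ht'
      have hper' : ux ((((1:ℝ)):ℂ) + (t:ℂ)*Complex.I) = ux ((((0:ℝ)):ℂ) + (t:ℂ)*Complex.I) := by
        have e : (((1:ℝ)):ℂ) + (t:ℂ)*Complex.I = ((((0:ℝ)):ℂ) + (t:ℂ)*Complex.I) + 1 := by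
          push_cast; ring
        rw [e]
        simp only [hux]
        rw [hperT, hperS _ _ rfl]
      simp only
      rw [← intervalIntegral.integral_of_le (by norm_num : (0:ℝ) ≤ 1), hFTC, hper', sub_self]
    -- assemble
    have hsub2 : J e2 - J e1 = ∫ x in (0:ℝ)..1,
        (ue ((x:ℂ)+(e2:ℂ)*Complex.I) - ue ((x:ℂ)+(e1:ℂ)*Complex.I)) := by
      rw [hJdef]
      simp only
      rw [intervalIntegral.integral_sub ((hcont_line ue hueC e2 h2').intervalIntegrable 0 1)
        ((hcont_line ue hueC e1 h1').intervalIntegrable 0 1)]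
    have hclower : (∫ x in (0:ℝ)..1, (-(∫ t in Ioc e1 e2, uxx ((x:ℂ)+(t:ℂ)*Complex.I))))
        ≤ ∫ x in (0:ℝ)..1, (ue ((x:ℂ)+(e2:ℂ)*Complex.I) - ue ((x:ℂ)+(e1:ℂ)*Complex.I)) := by
      apply intervalIntegral.integral_mono_on (by norm_num)
      · rw [intervalIntegrable_iff_integrableOn_Ioc_of_le (by norm_num)]
        exact hint2.integral_prod_left.neg
      · exact ((hcont_line ue hueC e2 h2').sub (hcont_line ue hueC e1 h1')).intervalIntegrable 0 1
      · intro x _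
        have h := hcomp x
        rwa [intervalIntegral.integral_of_le hle] at h
    have hczero : (∫ x in (0:ℝ)..1, (-(∫ t in Ioc e1 e2, uxx ((x:ℂ)+(t:ℂ)*Complex.I)))) = 0 := by
      rw [intervalIntegral.integral_neg, intervalIntegral.integral_of_le (by norm_num : (0:ℝ) ≤ 1)]
      rw [show (∫ x in Ioc (0:ℝ) 1, ∫ t in Ioc e1 e2, uxx ((x:ℂ)+(t:ℂ)*Complex.I))
        = (∫ t in Ioc e1 e2, ∫ x in Ioc (0:ℝ) 1, uxx ((x:ℂ)+(t:ℂ)*Complex.I)) from hswap, hzero,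
        neg_zero]
    linarith [hclower, hczero, hsub2.symm.le, hsub2.le]
  -- conclude convexity
  have hconv : ConvexOn ℝ (Ioo (-δ) δ) g := by
    apply MonotoneOn.convexOn_of_deriv (convex_Ioo _ _)
    · intro ε hε
      exact ((hD ε hε).continuousAt).continuousWithinAt
    · rw [interior_Ioo]
      intro ε hε
      exact ((hD ε hε).differentiableAt).differentiableWithinAt
    · rw [interior_Ioo]
      intro a ha b hb hab
      rw [(hD a ha).deriv, (hD b hb).deriv]
      exact hmono ha hb hab
  exact hconv

noncomputable def Ssum (B : Matrix (Fin 2) (Fin 2) ℂ) : ℝ :=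
  ∑ p : Fin 2 × Fin 2, Complex.normSq (B p.1 p.2)

lemma mnorm_eq (B : Matrix (Fin 2) (Fin 2) ℂ) : mnorm B = Real.sqrt (Ssum B) := by
  rw [mnorm, Ssum, Fintype.sum_prod_type]
  congr 1
  exact Finset.sum_congr rfl fun i _ => Finset.sum_congr rfl fun j _ => Complex.sq_norm _

lemma Ssum_nonneg (B : Matrix (Fin 2) (Fin 2) ℂ) : 0 ≤ Ssum B :=
  Finset.sum_nonneg fun _ _ => Complex.normSq_nonneg _

lemma Ssum_mul_le (M N : Matrix (Fin 2) (Fin 2) ℂ) : Ssum (M * N) ≤ Ssum M * Ssum N := by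
  have h : ∀ p : Fin 2 × Fin 2, Complex.normSq ((M * N) p.1 p.2)
      ≤ (∑ k : Fin 2, Complex.normSq (M p.1 k)) * (∑ k : Fin 2, Complex.normSq (N k p.2)) := by
    intro p
    rw [Matrix.mul_apply]
    exact normSq_sum_le _ _ _
  calc Ssum (M * N) ≤ ∑ p : Fin 2 × Fin 2,
        (∑ k : Fin 2, Complex.normSq (M p.1 k)) * (∑ k : Fin 2, Complex.normSq (N k p.2)) :=
        Finset.sum_le_sum fun p _ => h p
    _ = Ssum M * Ssum N := by
        simp only [Ssum, Fintype.sum_prod_type, Fin.sum_univ_two]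
        ring

lemma mnorm_mul_le (M N : Matrix (Fin 2) (Fin 2) ℂ) : mnorm (M * N) ≤ mnorm M * mnorm N := by
  rw [mnorm_eq, mnorm_eq, mnorm_eq, ← Real.sqrt_mul (Ssum_nonneg M)]
  exact Real.sqrt_le_sqrt (Ssum_mul_le M N)

lemma two_le_Ssum {M : Matrix (Fin 2) (Fin 2) ℂ} (h : M.det = 1) : 2 ≤ Ssum M := by
  have hd : ‖M 0 0 * M 1 1 - M 0 1 * M 1 0‖ = 1 := by
    rw [← Matrix.det_fin_two, h]; simp
  have h1 : (1:ℝ) ≤ ‖M 0 0‖ * ‖M 1 1‖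
      + ‖M 0 1‖ * ‖M 1 0‖ := by
    rw [← hd]
    calc ‖M 0 0 * M 1 1 - M 0 1 * M 1 0‖
        ≤ ‖M 0 0 * M 1 1‖ + ‖M 0 1 * M 1 0‖ :=
          norm_sub_le _ _
      _ = _ := by rw [norm_mul, norm_mul]
    
  have e : Ssum M = ‖M 0 0‖ ^2 + ‖M 0 1‖^2
      + ‖M 1 0‖^2 + ‖M 1 1‖^2 := by
    rw [Ssum, Fintype.sum_prod_type]
    simp [Fin.sum_univ_two, ← Complex.sq_norm]
    ring
  rw [e]
  nlinarith [sq_nonneg (‖M 0 0‖ - ‖M 1 1‖),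
    sq_nonneg (‖M 0 1‖ - ‖M 1 0‖)]

lemma one_le_mnorm {M : Matrix (Fin 2) (Fin 2) ℂ} (h : M.det = 1) : 1 ≤ mnorm M := by
  rw [mnorm_eq]
  have := two_le_Ssum h
  nlinarith [Real.sq_sqrt (Ssum_nonneg M), Real.sqrt_nonneg (Ssum M)]

lemma mnorm_one : mnorm (1 : Matrix (Fin 2) (Fin 2) ℂ) = Real.sqrt 2 := by
  rw [mnorm_eq]
  congr 1
  rw [Ssum, Fintype.sum_prod_type]
  norm_num [Fin.sum_univ_two, Matrix.one_apply]



theorem lyapunov_convex_in_strip (α δ : ℝ) (hδ : 0 < δ)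
    (A : ℂ → Matrix (Fin 2) (Fin 2) ℂ)
    (hholo : ∀ i j, DifferentiableOn ℂ (fun z => A z i j) {z : ℂ | |z.im| < δ})
    (hbd : ∃ C : ℝ, ∀ z : ℂ, |z.im| < δ → mnorm (A z) ≤ C)
    (hper : ∀ z : ℂ, A (z + 1) = A z)
    (hdet : ∀ z : ℂ, |z.im| < δ → (A z).det = 1) :
    ConvexOn ℝ (Set.Ioo (-δ) δ)
      (fun ε : ℝ => lyap α (fun x : ℝ => A (x + ε * Complex.I))) := by
  obtain ⟨C0, hC0⟩ := hbd
  set U : Set ℂ := {z : ℂ | |z.im| < δ} with hU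
  have hmem : ∀ (x ε : ℝ), |ε| < δ → ((x:ℂ) + (ε:ℂ) * Complex.I) ∈ U := by
    intro x ε hε
    simp only [hU, mem_setOf_eq]
    simpa using hε
  set C : ℝ := max C0 (Real.sqrt 2) with hC
  have hs2 : (1:ℝ) ≤ Real.sqrt 2 := by
    rw [show (1:ℝ) = Real.sqrt 1 from (Real.sqrt_one).symm]
    exact Real.sqrt_le_sqrt (by norm_num)
  have hC1 : 1 ≤ C := le_trans hs2 (le_max_right _ _)
  have hCbd : ∀ z ∈ U, mnorm (A z) ≤ C := fun z hz => (hC0 z hz).trans (le_max_left _ _)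
  -- the holomorphic cocycle products
  set G : ℕ → ℂ → Matrix (Fin 2) (Fin 2) ℂ :=
    fun n z => (((List.range n).reverse).map (fun k => A (z + (k:ℕ) * (α:ℂ)))).prod with hG
  have hG0 : ∀ z, G 0 z = 1 := by intro z; simp [hG]
  have hGrec : ∀ n z, G (n+1) z = A (z + (n:ℕ) * (α:ℂ)) * G n z := by
    intro n z
    simp only [hG, List.range_succ, List.reverse_append, List.reverse_singleton,
      List.map_append, List.map_cons, List.prod_cons, List.singleton_append]
  have hcorec : ∀ (B : ℝ → Matrix (Fin 2) (Fin 2) ℂ) (n : ℕ) (x : ℝ),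
      cocycle B α (n+1) x = B (x + (n:ℕ) * α) * cocycle B α n x := by
    intro B n x
    simp [cocycle, List.range_succ]
  have hco0 : ∀ (B : ℝ → Matrix (Fin 2) (Fin 2) ℂ) (x : ℝ), cocycle B α 0 x = 1 := by
    intro B x; simp [cocycle]
  have hGco : ∀ (ε x : ℝ) (n : ℕ),
      cocycle (fun x : ℝ => A ((x:ℂ) + (ε:ℂ)*Complex.I)) α n x = G n ((x:ℂ) + (ε:ℂ)*Complex.I) := by
    intro ε x n
    induction n with
    | zero => rw [hco0, hG0]
    | succ n ih =>
      rw [hcorec, hGrec, ih]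
      congr 2
      push_cast
      ring
  have hmemc : ∀ (z : ℂ) (n : ℕ), z ∈ U → z + (n:ℕ) * (α:ℂ) ∈ U := by
    intro z n hz
    simp only [hU, mem_setOf_eq] at hz ⊢
    have : (z + (n:ℕ) * (α:ℂ)).im = z.im := by simp
    rwa [this]
  have hGdiff : ∀ (n : ℕ) (i j : Fin 2), DifferentiableOn ℂ (fun z => G n z i j) U := by
    intro n
    induction n with
    | zero =>
      intro i j
      have : (fun z => G 0 z i j) = fun _ => (1 : Matrix (Fin 2) (Fin 2) ℂ) i j := by
        funext z; rw [hG0]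
      rw [this]; exact differentiableOn_const _
    | succ n ih =>
      intro i j
      have : (fun z => G (n+1) z i j)
          = fun z => ∑ k, A (z + (n:ℕ) * (α:ℂ)) i k * G n z k j := by
        funext z; rw [hGrec, Matrix.mul_apply]
      rw [this]
      apply DifferentiableOn.fun_sum
      intro k _
      apply DifferentiableOn.mul _ (ih k j)
      exact (hholo i k).comp ((differentiable_id.add_const _).differentiableOn)
        (fun z hz => hmemc z n hz)
  have hGper : ∀ n z, G n (z + 1) = G n z := by
    intro n z
    simp only [hG]
    congr 1
    apply List.map_congr_left
    intro k _
    have h1 : z + 1 + (k:ℕ) * (α:ℂ) = (z + (k:ℕ) * (α:ℂ)) + 1 := by ring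
    rw [h1, hper]
  have hGdet : ∀ (n : ℕ), ∀ z ∈ U, (G n z).det = 1 := by
    intro n
    induction n with
    | zero => intro z hz; rw [hG0]; exact Matrix.det_one
    | succ n ih =>
      intro z hz
      rw [hGrec, Matrix.det_mul, hdet _ (hmemc z n hz), ih z hz, one_mul]
  have hGbd : ∀ (n : ℕ), ∀ z ∈ U, mnorm (G n z) ≤ Real.sqrt 2 * C^n := by
    intro n
    induction n with
    | zero => intro z hz; rw [hG0, mnorm_one]; simp
    | succ n ih =>
      intro z hz
      rw [hGrec]
      calc mnorm (A (z + (n:ℕ) * (α:ℂ)) * G n z)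
          ≤ mnorm (A (z + (n:ℕ) * (α:ℂ))) * mnorm (G n z) := mnorm_mul_le _ _
        _ ≤ C * (Real.sqrt 2 * C^n) := by
            apply mul_le_mul (hCbd _ (hmemc z n hz)) (ih z hz)
            · rw [mnorm_eq]; exact Real.sqrt_nonneg _
            · linarith
        _ = Real.sqrt 2 * C^(n+1) := by ring
  -- the sequence of integrals
  set In : ℕ → ℝ → ℝ := fun n ε => ∫ x in (0:ℝ)..1,
    Real.log (mnorm (cocycle (fun x : ℝ => A ((x:ℂ) + (ε:ℂ)*Complex.I)) α n x)) with hIn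
  have hconvn : ∀ n : ℕ, ConvexOn ℝ (Ioo (-δ) δ) (In n) := by
    intro n
    have hk := key hδ (ι := Fin 2 × Fin 2) (fun p z => G n z p.1 p.2)
      (fun p => hGdiff n p.1 p.2) (fun p z => by show G n (z+1) p.1 p.2 = G n z p.1 p.2; rw [hGper])
      (fun z hz => by
        have h2 := two_le_Ssum (hGdet n z hz)
        have h3 : Ssum (G n z) = ∑ p : Fin 2 × Fin 2, Complex.normSq (G n z p.1 p.2) := rfl
        rw [h3] at h2
        linarith)
    have heq : In n = fun ε : ℝ => (2:ℝ)⁻¹ • (∫ x in (0:ℝ)..1,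
        Real.log (∑ p : Fin 2 × Fin 2,
          Complex.normSq (G n ((x:ℂ)+(ε:ℂ)*Complex.I) p.1 p.2))) := by
      funext ε
      rw [hIn]
      simp only [smul_eq_mul]
      rw [← intervalIntegral.integral_const_mul]
      apply intervalIntegral.integral_congr
      intro x _
      dsimp only
      rw [hGco, mnorm_eq, Real.log_sqrt (Ssum_nonneg _)]
      have h3 : Ssum (G n ((x:ℂ)+(ε:ℂ)*Complex.I)) = ∑ p : Fin 2 × Fin 2,
          Complex.normSq (G n ((x:ℂ)+(ε:ℂ)*Complex.I) p.1 p.2) := rfl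
      rw [h3]
      ring
    rw [heq]
    exact hk.smul (by norm_num)
  -- uniform bounds
  set B : ℝ := Real.log (Real.sqrt 2) + Real.log C with hB
  have hls2 : 0 ≤ Real.log (Real.sqrt 2) := Real.log_nonneg hs2
  have hlC : 0 ≤ Real.log C := Real.log_nonneg hC1
  have hBnn : 0 ≤ B := by rw [hB]; linarith
  have hlow : ∀ ε : ℝ, |ε| < δ → ∀ n : ℕ, 0 ≤ (n:ℝ)⁻¹ * In n ε := by
    intro ε hε n
    apply mul_nonneg (inv_nonneg.2 (Nat.cast_nonneg n))
    apply intervalIntegral.integral_nonneg (by norm_num)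
    intro x _
    apply Real.log_nonneg
    rw [hGco]
    exact one_le_mnorm (hGdet n _ (hmem x ε hε))
  have hupp : ∀ ε : ℝ, |ε| < δ → ∀ n : ℕ, (n:ℝ)⁻¹ * In n ε ≤ B := by
    intro ε hε n
    rcases Nat.eq_zero_or_pos n with h0 | hn
    · subst h0; simpa using hBnn
    · have hmnpos : ∀ x : ℝ, (0:ℝ) < mnorm (G n ((x:ℂ)+(ε:ℂ)*Complex.I)) := fun x =>
        lt_of_lt_of_le one_pos (one_le_mnorm (hGdet n _ (hmem x ε hε)))
      have hentry : ∀ i j : Fin 2, Continuous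
          (fun x : ℝ => G n ((x:ℂ)+(ε:ℂ)*Complex.I) i j) := fun i j =>
        ((hGdiff n i j).continuousOn).comp_continuous
          (Complex.continuous_ofReal.add continuous_const) (fun x => hmem x ε hε)
      have hSsc : Continuous (fun x : ℝ => Ssum (G n ((x:ℂ)+(ε:ℂ)*Complex.I))) :=
        continuous_finset_sum _ fun p _ => Complex.continuous_normSq.comp (hentry p.1 p.2)
      have hcont : Continuous (fun x : ℝ =>
          Real.log (mnorm (G n ((x:ℂ)+(ε:ℂ)*Complex.I)))) := by
        apply Continuous.log
        · simp only [mnorm_eq]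
          exact Real.continuous_sqrt.comp hSsc
        · intro x
          exact ne_of_gt (hmnpos x)
      have hIle : In n ε ≤ Real.log (Real.sqrt 2 * C^n) := by
        have e1 : In n ε = ∫ x in (0:ℝ)..1,
            Real.log (mnorm (G n ((x:ℂ)+(ε:ℂ)*Complex.I))) := by
          rw [hIn]
          apply intervalIntegral.integral_congr
          intro x _
          dsimp only
          rw [hGco]
        rw [e1]
        calc (∫ x in (0:ℝ)..1, Real.log (mnorm (G n ((x:ℂ)+(ε:ℂ)*Complex.I))))
            ≤ ∫ _x in (0:ℝ)..1, Real.log (Real.sqrt 2 * C^n) := by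
              apply intervalIntegral.integral_mono_on (by norm_num)
                (hcont.intervalIntegrable 0 1) intervalIntegrable_const
              intro x _
              exact (Real.log_le_log_iff (hmnpos x) (by positivity)).2
                (hGbd n _ (hmem x ε hε))
          _ = Real.log (Real.sqrt 2 * C^n) := by simp
      have hsplit : Real.log (Real.sqrt 2 * C^n) = Real.log (Real.sqrt 2) + n * Real.log C := by
        rw [Real.log_mul (by positivity) (by positivity), Real.log_pow]
      have hinv1 : (n:ℝ)⁻¹ ≤ 1 := by
        apply inv_le_one_of_one_le₀
        exact_mod_cast hn
      have hnne : (n:ℝ) ≠ 0 := by exact_mod_cast Nat.pos_iff_ne_zero.1 hn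
      have h4 : (n:ℝ)⁻¹ * In n ε ≤ (n:ℝ)⁻¹ * (Real.log (Real.sqrt 2) + n * Real.log C) := by
        apply mul_le_mul_of_nonneg_left _ (inv_nonneg.2 (Nat.cast_nonneg n))
        rw [← hsplit]; exact hIle
      have h5 : (n:ℝ)⁻¹ * (Real.log (Real.sqrt 2) + n * Real.log C)
          = (n:ℝ)⁻¹ * Real.log (Real.sqrt 2) + Real.log C := by
        field_simp
      have h6 : (n:ℝ)⁻¹ * Real.log (Real.sqrt 2) ≤ Real.log (Real.sqrt 2) := by
        nlinarith [inv_nonneg.2 (Nat.cast_nonneg (α := ℝ) n)]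
      rw [hB]
      linarith
  -- assemble convexity of the limsup
  refine ⟨convex_Ioo _ _, ?_⟩
  intro p hp q hq a b ha hb hab
  have hpq : a • p + b • q ∈ Ioo (-δ) δ := (convex_Ioo (-δ) δ) hp hq ha hb hab
  have habsm : ∀ {t : ℝ}, t ∈ Ioo (-δ) δ → |t| < δ := fun ht => abs_lt.2 ⟨ht.1, ht.2⟩
  simp only [smul_eq_mul] at hpq ⊢
  show Filter.limsup (fun n : ℕ => (n:ℝ)⁻¹ * In n (a * p + b * q)) atTop
    ≤ a * Filter.limsup (fun n : ℕ => (n:ℝ)⁻¹ * In n p) atTop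
      + b * Filter.limsup (fun n : ℕ => (n:ℝ)⁻¹ * In n q) atTop
  set Lv : ℝ := Filter.limsup (fun n : ℕ => (n:ℝ)⁻¹ * In n p) atTop with hLv
  set Lw : ℝ := Filter.limsup (fun n : ℕ => (n:ℝ)⁻¹ * In n q) atTop with hLw
  have hptw : ∀ n : ℕ, (n:ℝ)⁻¹ * In n (a*p+b*q)
      ≤ a * ((n:ℝ)⁻¹ * In n p) + b * ((n:ℝ)⁻¹ * In n q) := by
    intro n
    have h := (hconvn n).2 hp hq ha hb hab
    simp only [smul_eq_mul] at h
    calc (n:ℝ)⁻¹ * In n (a*p+b*q) ≤ (n:ℝ)⁻¹ * (a * In n p + b * In n q) :=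
          mul_le_mul_of_nonneg_left h (inv_nonneg.2 (Nat.cast_nonneg n))
      _ = a * ((n:ℝ)⁻¹ * In n p) + b * ((n:ℝ)⁻¹ * In n q) := by ring
  have hbv : IsBoundedUnder (· ≤ ·) atTop (fun n : ℕ => (n:ℝ)⁻¹ * In n p) :=
    ⟨B, eventually_map.2 (Eventually.of_forall (fun n => hupp p (habsm hp) n))⟩
  have hbw : IsBoundedUnder (· ≤ ·) atTop (fun n : ℕ => (n:ℝ)⁻¹ * In n q) :=
    ⟨B, eventually_map.2 (Eventually.of_forall (fun n => hupp q (habsm hq) n))⟩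
  have hcb : IsCoboundedUnder (· ≤ ·) atTop (fun n : ℕ => (n:ℝ)⁻¹ * In n (a*p+b*q)) :=
    IsBoundedUnder.isCoboundedUnder_le
      ⟨0, eventually_map.2 (Eventually.of_forall (fun n => hlow _ (habsm hpq) n))⟩
  have hfin : ∀ η : ℝ, 0 < η →
      Filter.limsup (fun n : ℕ => (n:ℝ)⁻¹ * In n (a*p+b*q)) atTop ≤ a * Lv + b * Lw + η := by
    intro η hη
    have hv' : ∀ᶠ (n : ℕ) in atTop, (n:ℝ)⁻¹ * In n p < Lv + η :=
      eventually_lt_of_limsup_lt (lt_add_of_pos_right _ hη) hbv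
    have hw' : ∀ᶠ (n : ℕ) in atTop, (n:ℝ)⁻¹ * In n q < Lw + η :=
      eventually_lt_of_limsup_lt (lt_add_of_pos_right _ hη) hbw
    apply Filter.limsup_le_of_le hcb
    filter_upwards [hv', hw'] with n h1 h2
    have h3 := hptw n
    have h4 : a * ((n:ℝ)⁻¹ * In n p) ≤ a * (Lv + η) := mul_le_mul_of_nonneg_left h1.le ha
    have h5 : b * ((n:ℝ)⁻¹ * In n q) ≤ b * (Lw + η) := mul_le_mul_of_nonneg_left h2.le hb
    have h6 : a * (Lv + η) + b * (Lw + η) = a*Lv + b*Lw + (a+b)*η := by ring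
    rw [hab, one_mul] at h6
    linarith
  by_contra hcon
  push_neg at hcon
  set L : ℝ := Filter.limsup (fun n : ℕ => (n:ℝ)⁻¹ * In n (a*p+b*q)) atTop with hL
  have hη : 0 < (L - (a * Lv + b * Lw))/2 := by linarith
  have := hfin _ hη
  linarith
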